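/- Let 𝕋^n = {z ∈ ℂ^n : |z_1| = ⋯ = |z_n| = 1} be the unit torus. Then the set of functions of the form z ↦ P(z_1, …, z_n, conj(z_1)·⋯·conj(z_n)), where P is a holomorphic polynomial on ℂ^{n+1}, is dense in C(𝕋^n, ℂ) with the uniform norm. (In other words, {z_1, …, z_n, \bar z_1 ⋯ \bar z_n} forms a PD-basis of C^0(𝕋^n).) -/

import Mathlib

/-- The unit torus `𝕋^n = {z ∈ ℂ^n : |z_1| = ⋯ = |z_n| = 1}`. -/
def unitTorus (n : ℕ) : Set (EuclideanSpace ℂ (Fin n)) :=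
  {z | ∀ j : Fin n, ‖z j‖ = 1}

open MvPolynomial in
/-- The polynomial combinations of `z_1, …, z_n, \bar z_1 ⋯ \bar z_n` are
dense in `C(𝕋^n, ℂ)` with the uniform norm (equivalently, the compact-open topology, since
`𝕋^n` is compact): `{z_1, …, z_n, \bar z_1 ⋯ \bar z_n}` is a PD-basis of `C^0(𝕋^n)`. -/
theorem stmt18 (n : ℕ) :
    Dense {g : C(↥(unitTorus n), ℂ) | ∃ P : MvPolynomial (Fin (n + 1)) ℂ,
      ∀ z : ↥(unitTorus n), g z =
        MvPolynomial.eval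
          (Fin.snoc (fun i => (z : EuclideanSpace ℂ (Fin n)) i)
            (∏ j : Fin n, starRingEnd ℂ ((z : EuclideanSpace ℂ (Fin n)) j))) P} := by
  classical
  set v : ↥(unitTorus n) → Fin (n + 1) → ℂ := fun z =>
    Fin.snoc (fun i => (z : EuclideanSpace ℂ (Fin n)) i)
      (∏ j : Fin n, starRingEnd ℂ ((z : EuclideanSpace ℂ (Fin n)) j)) with hv
  have hcz : ∀ (z : ↥(unitTorus n)) (i : Fin n),
      (z : EuclideanSpace ℂ (Fin n)) i * starRingEnd ℂ ((z : EuclideanSpace ℂ (Fin n)) i) = 1 := by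
    intro z i
    rw [Complex.mul_conj]
    norm_cast
    rw [Complex.normSq_eq_norm_sq, z.2 i]
    norm_num
  have hzne : ∀ (z : ↥(unitTorus n)) (i : Fin n), (z : EuclideanSpace ℂ (Fin n)) i ≠ 0 := by
    intro z i h
    have := z.2 i
    rw [h] at this
    simp at this
  have hvc : ∀ (z : ↥(unitTorus n)) (i : Fin n),
      v z (Fin.castSucc i) = (z : EuclideanSpace ℂ (Fin n)) i := by
    intro z i; simp [hv]
  have hvl : ∀ z : ↥(unitTorus n),
      v z (Fin.last n) = ∏ j : Fin n, starRingEnd ℂ ((z : EuclideanSpace ℂ (Fin n)) j) := by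
    intro z; simp [hv]
  have hw : ∀ z : ↥(unitTorus n),
      v z (Fin.last n) * ∏ i : Fin n, v z (Fin.castSucc i) = 1 := by
    intro z
    rw [hvl z, Finset.prod_congr rfl (fun i _ => hvc z i), ← Finset.prod_mul_distrib]
    rw [Finset.prod_congr rfl (fun i _ => (mul_comm _ _).trans (hcz z i))]
    simp
  -- compactness of the torus
  have hclosed : IsClosed (unitTorus n) := by
    have : unitTorus n = ⋂ j : Fin n, {z : EuclideanSpace ℂ (Fin n) | ‖z j‖ = 1} := by
      ext z; simp [unitTorus]
    rw [this]
    exact isClosed_iInter fun j => isClosed_eq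
      (by fun_prop) continuous_const
  have hbdd : Bornology.IsBounded (unitTorus n) := by
    apply Bornology.IsBounded.subset
      (Metric.isBounded_closedBall (x := (0 : EuclideanSpace ℂ (Fin n))) (r := Real.sqrt n))
    intro z hz
    simp only [Metric.mem_closedBall, dist_zero_right]
    rw [EuclideanSpace.norm_eq]
    apply Real.sqrt_le_sqrt
    calc ∑ i : Fin n, ‖z i‖ ^ 2 = ∑ _i : Fin n, (1 : ℝ) := by
          refine Finset.sum_congr rfl fun i _ => ?_
          rw [hz i]; norm_num
      _ ≤ n := by simp
  haveI : CompactSpace ↥(unitTorus n) :=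
    isCompact_iff_compactSpace.mp (Metric.isCompact_of_isClosed_isBounded hclosed hbdd)
  set S : Set C(↥(unitTorus n), ℂ) := {g | ∃ P : MvPolynomial (Fin (n + 1)) ℂ,
      ∀ z : ↥(unitTorus n), g z = MvPolynomial.eval (v z) P} with hS
  let A : StarSubalgebra ℂ C(↥(unitTorus n), ℂ) :=
    { carrier := S
      mul_mem' := by
        rintro f g ⟨P, hP⟩ ⟨Q, hQ⟩
        exact ⟨P * Q, fun z => by simp [hP z, hQ z]⟩
      one_mem' := ⟨1, fun z => by simp⟩
      add_mem' := by
        rintro f g ⟨P, hP⟩ ⟨Q, hQ⟩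
        exact ⟨P + Q, fun z => by simp [hP z, hQ z]⟩
      zero_mem' := ⟨0, fun z => by simp⟩
      algebraMap_mem' := fun c => ⟨MvPolynomial.C c, fun z => by simp⟩
      star_mem' := by
        rintro f ⟨P, hP⟩
        set σ : Fin (n + 1) → MvPolynomial (Fin (n + 1)) ℂ :=
          Fin.snoc (fun i : Fin n => MvPolynomial.X (Fin.last n) *
              ∏ k ∈ Finset.univ.erase i, MvPolynomial.X (Fin.castSucc k))
            (∏ i : Fin n, MvPolynomial.X (Fin.castSucc i)) with hσ
        refine ⟨MvPolynomial.eval₂ (MvPolynomial.C.comp (starRingEnd ℂ)) σ P, fun z => ?_⟩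
        have key : ∀ j : Fin (n + 1),
            starRingEnd ℂ (v z j) = MvPolynomial.eval (v z) (σ j) := by
          intro j
          refine Fin.lastCases ?_ (fun i => ?_) j
          · rw [hvl z, map_prod]
            simp only [hσ, Fin.snoc_last]
            rw [map_prod]
            refine Finset.prod_congr rfl fun i _ => ?_
            rw [eval_X, hvc z i, Complex.conj_conj]
          · rw [hvc z i]
            refine mul_right_cancel₀ (hzne z i) ?_
            rw [mul_comm ((starRingEnd ℂ) _), hcz z i]
            simp only [hσ, Fin.snoc_castSucc, map_mul, map_prod, eval_X]
            rw [mul_assoc, show (z : EuclideanSpace ℂ (Fin n)) i = v z (Fin.castSucc i) from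
              (hvc z i).symm, Finset.prod_erase_mul _ _ (Finset.mem_univ i), hw z]
        have e1 : starRingEnd ℂ (eval (v z) P)
            = eval₂ (starRingEnd ℂ) (fun j => starRingEnd ℂ (v z j)) P := by
          rw [show eval (v z) P = eval₂ (RingHom.id ℂ) (v z) P from rfl,
            eval₂_comp_left (starRingEnd ℂ) (RingHom.id ℂ) (v z) P, RingHom.comp_id]
          rfl
        have e2 : eval (v z) (eval₂ (MvPolynomial.C.comp (starRingEnd ℂ)) σ P)
            = eval₂ (starRingEnd ℂ) (fun j => eval (v z) (σ j)) P := by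
          rw [eval₂_comp_left (eval (v z)) (MvPolynomial.C.comp (starRingEnd ℂ)) σ P]
          congr 1
          ext c
          simp
        calc (star f : C(↥(unitTorus n), ℂ)) z = starRingEnd ℂ (f z) := rfl
          _ = starRingEnd ℂ (eval (v z) P) := by rw [hP z]
          _ = eval₂ (starRingEnd ℂ) (fun j => starRingEnd ℂ (v z j)) P := e1
          _ = eval₂ (starRingEnd ℂ) (fun j => eval (v z) (σ j)) P := by
              exact congrFun (congrArg _ (funext fun j => key j)) P
          _ = eval (v z) (eval₂ (MvPolynomial.C.comp (starRingEnd ℂ)) σ P) := e2.symm }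
  have hSep : A.SeparatesPoints := by
    rintro x y hxy
    have : ∃ i : Fin n, (x : EuclideanSpace ℂ (Fin n)) i ≠ (y : EuclideanSpace ℂ (Fin n)) i := by
      by_contra h
      push_neg at h
      exact hxy (Subtype.ext (by ext i; exact h i))
    obtain ⟨i, hi⟩ := this
    refine ⟨_, ⟨⟨fun z => (z : EuclideanSpace ℂ (Fin n)) i,
      by fun_prop⟩,
      ⟨MvPolynomial.X (Fin.castSucc i), fun z => by rw [eval_X, hvc]; rfl⟩, rfl⟩, hi⟩
  have htop := ContinuousMap.starSubalgebra_topologicalClosure_eq_top_of_separatesPoints A hSep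
  rw [dense_iff_closure_eq]
  have h1 : (A.topologicalClosure : Set C(↥(unitTorus n), ℂ)) = closure S := rfl
  rw [← h1, htop]
  rfl
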